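/- Let a < b be real numbers, let u : ℝ → ℝ be continuously differentiable on [a,b], let δ ≥ 0, and let w : ℝ → ℝ be integrable on [a,b] with |w(s) − 1| ≤ δ for all s ∈ [a,b]. Then for every r ∈ [a,b], | u(r) − (b − a)⁻¹ ∫_a^b u(s) w(s) ds | ≤ ∫_a^b |u'(s)| ds + δ (b − a)⁻¹ ∫_a^b |u(s)| ds. -/

import Mathlib

open MeasureTheory intervalIntegral Set


/-- Fiberwise content of Lemma 4.2 of the paper: if `u` is `C¹` on `[a,b]`, `w` is
integrable on `[a,b]` with `|w − 1| ≤ δ` there, then for every `r ∈ [a,b]`,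
`|u(r) − (b−a)⁻¹ ∫_a^b u w| ≤ ∫_a^b |u'| + δ (b−a)⁻¹ ∫_a^b |u|`. -/
theorem stmt8 (a b : ℝ) (hab : a < b) (u w : ℝ → ℝ)
    (hu : ContDiffOn ℝ 1 u (Set.Icc a b))
    (δ : ℝ) (hδ : 0 ≤ δ)
    (hw : MeasureTheory.IntegrableOn w (Set.Icc a b))
    (hwδ : ∀ s ∈ Set.Icc a b, |w s - 1| ≤ δ) :
    ∀ r ∈ Set.Icc a b,
      |u r - (b - a)⁻¹ * ∫ s in a..b, u s * w s| ≤
        (∫ s in a..b, |derivWithin u (Set.Icc a b) s|) +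
          δ * (b - a)⁻¹ * ∫ s in a..b, |u s| := by
  intro r hr
  set g : ℝ → ℝ := derivWithin u (Set.Icc a b) with hg
  have hba : (0:ℝ) < b - a := sub_pos.2 hab
  have huIcc : Set.uIcc a b = Set.Icc a b := Set.uIcc_of_le hab.le
  have hucont : ContinuousOn u (Set.Icc a b) := hu.continuousOn
  have hgcont : ContinuousOn g (Set.Icc a b) :=
    hu.continuousOn_derivWithin (uniqueDiffOn_Icc hab) le_rfl
  have huint : IntervalIntegrable u volume a b :=
    (hucont.mono huIcc.subset).intervalIntegrable
  have hgint : IntervalIntegrable g volume a b :=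
    (hgcont.mono huIcc.subset).intervalIntegrable
  -- integrability of u * w
  have humeas : AEStronglyMeasurable u (volume.restrict (Set.Icc a b)) :=
    hucont.aestronglyMeasurable measurableSet_Icc
  obtain ⟨C, hC⟩ : ∃ C, ∀ x ∈ Set.Icc a b, ‖u x‖ ≤ C :=
    IsCompact.exists_bound_of_continuousOn isCompact_Icc hucont
  have hubd : ∀ᵐ x ∂(volume.restrict (Set.Icc a b)), ‖u x‖ ≤ C :=
    (ae_restrict_iff' measurableSet_Icc).2 (Filter.Eventually.of_forall hC)
  have huw : IntervalIntegrable (fun s => u s * w s) volume a b := by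
    rw [intervalIntegrable_iff_integrableOn_Icc_of_le hab.le]
    exact Integrable.bdd_mul hw humeas hubd
  -- FTC on subintervals
  have ftc : ∀ x ∈ Set.Icc a b, ∀ y ∈ Set.Icc a b, x ≤ y →
      u y - u x = ∫ t in x..y, g t := by
    intro x hx y hy hxy
    symm
    apply intervalIntegral.integral_eq_sub_of_hasDerivAt_of_le hxy
    · exact hucont.mono (Set.Icc_subset_Icc hx.1 hy.2)
    · intro t ht
      have htab : t ∈ Set.Ioo a b := ⟨lt_of_le_of_lt hx.1 ht.1, lt_of_lt_of_le ht.2 hy.2⟩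
      have hd := (hu.differentiableOn one_ne_zero t ⟨htab.1.le, htab.2.le⟩).hasDerivWithinAt
      exact hd.hasDerivAt (Icc_mem_nhds htab.1 htab.2)
    · exact hgint.mono_set (by rw [huIcc]; exact Set.uIcc_subset_Icc hx hy)
  have hgabs_nonneg : 0 ≤ᵐ[volume.restrict (Set.Ioc a b)] fun t => |g t| :=
    Filter.Eventually.of_forall fun t => abs_nonneg _
  have key : ∀ s ∈ Set.Icc a b, |u r - u s| ≤ ∫ t in a..b, |g t| := by
    intro s hs
    rcases le_total s r with h | h
    · rw [ftc s hs r hr h]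
      calc |∫ t in s..r, g t| ≤ ∫ t in s..r, |g t| :=
            intervalIntegral.abs_integral_le_integral_abs h
        _ ≤ ∫ t in a..b, |g t| :=
            intervalIntegral.integral_mono_interval hs.1 h hr.2 hgabs_nonneg hgint.abs
    · rw [show u r - u s = -(u s - u r) by ring, abs_neg, ftc r hr s hs h]
      calc |∫ t in r..s, g t| ≤ ∫ t in r..s, |g t| :=
            intervalIntegral.abs_integral_le_integral_abs h
        _ ≤ ∫ t in a..b, |g t| :=
            intervalIntegral.integral_mono_interval hr.1 h hs.2 hgabs_nonneg hgint.abs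
  -- decomposition
  set A : ℝ := ∫ s in a..b, (u r - u s) with hA
  set B : ℝ := ∫ s in a..b, u s * (1 - w s) with hB
  have hdiffint : IntervalIntegrable (fun s => u r - u s) volume a b :=
    IntervalIntegrable.sub intervalIntegrable_const huint
  have huw1int : IntervalIntegrable (fun s => u s * (1 - w s)) volume a b := by
    have : (fun s => u s * (1 - w s)) = fun s => u s - u s * w s := by
      funext s; ring
    rw [this]; exact huint.sub huw
  have hdecomp : u r - (b - a)⁻¹ * ∫ s in a..b, u s * w s = (b - a)⁻¹ * (A + B) := by
    have hAB : A + B = (b - a) * u r - ∫ s in a..b, u s * w s := by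
      rw [hA, hB, ← intervalIntegral.integral_add hdiffint huw1int]
      have : ∀ s, u r - u s + u s * (1 - w s) = u r - u s * w s := fun s => by ring
      simp_rw [this]
      rw [intervalIntegral.integral_sub intervalIntegrable_const huw,
        intervalIntegral.integral_const, smul_eq_mul]
    rw [hAB]
    field_simp
  rw [hdecomp, abs_mul, abs_of_pos (inv_pos.2 hba)]
  have hAbound : |A| ≤ (b - a) * ∫ t in a..b, |g t| := by
    calc |A| ≤ ∫ s in a..b, |u r - u s| :=
          intervalIntegral.abs_integral_le_integral_abs hab.le
      _ ≤ ∫ s in a..b, ∫ t in a..b, |g t| := by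
          apply intervalIntegral.integral_mono_on hab.le hdiffint.abs
            intervalIntegrable_const
          intro s hs; exact key s hs
      _ = (b - a) * ∫ t in a..b, |g t| := by
          rw [intervalIntegral.integral_const, smul_eq_mul]
  have hBbound : |B| ≤ δ * ∫ s in a..b, |u s| := by
    calc |B| ≤ ∫ s in a..b, |u s * (1 - w s)| :=
          intervalIntegral.abs_integral_le_integral_abs hab.le
      _ ≤ ∫ s in a..b, δ * |u s| := by
          apply intervalIntegral.integral_mono_on hab.le huw1int.abs
            (huint.abs.const_mul δ)
          intro s hs
          rw [abs_mul, mul_comm]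
          apply mul_le_mul_of_nonneg_right _ (abs_nonneg _)
          rw [abs_sub_comm]
          exact hwδ s hs
      _ = δ * ∫ s in a..b, |u s| := by
          rw [intervalIntegral.integral_const_mul]
  calc (b - a)⁻¹ * |A + B| ≤ (b - a)⁻¹ * (|A| + |B|) := by
        apply mul_le_mul_of_nonneg_left (abs_add_le _ _) (inv_pos.2 hba).le
    _ ≤ (b - a)⁻¹ * ((b - a) * (∫ t in a..b, |g t|) + δ * ∫ s in a..b, |u s|) := by
        apply mul_le_mul_of_nonneg_left (add_le_add hAbound hBbound) (inv_pos.2 hba).le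
    _ = (∫ s in a..b, |g s|) + δ * (b - a)⁻¹ * ∫ s in a..b, |u s| := by
        field_simp
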